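/- Assume every hospital's preference is substitutable. Then the doctor-optimal rule φ̄ (the rule that assigns to each doctor preference profile the output of the doctor-proposing deferred acceptance algorithm) is not obviously manipulable: no doctor has an obvious manipulation of φ̄ at any preference. -/

import Mathlib

set_option linter.unusedSectionVars false

namespace Matching

open Finset

/-- A many-to-one matching market with contracts: each contract `x` involves exactly one
doctor `xD x` and one hospital `xH x`; each hospital `h` has a fixed antisymmetric,
transitive and complete preference `prH h`, modelled as a linear order on sets of
contracts (only its comparisons between allocations of contracts involving `h` matter). -/
structure Market (D H X : Type*) where
  xD : X → D
  xH : X → H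
  prH : H → LinearOrder (Finset X)

/-- A doctor's preference: an antisymmetric, transitive and complete preference, modelled
as a linear order on sets of contracts (only comparisons between `∅` and singletons of
contracts involving the doctor matter). -/
abbrev Pref (X : Type*) := LinearOrder (Finset X)

/-- A profile of doctors' preferences. -/
abbrev Profile (D X : Type*) := D → Pref X

variable {D H X : Type*}
variable [DecidableEq D] [DecidableEq H] [DecidableEq X] [Fintype D] [Fintype H] [Fintype X]

/-- `Y_d` : the contracts in `Y` involving doctor `d`. -/
def docPart (M : Market D H X) (Y : Finset X) (d : D) : Finset X :=
  Y.filter fun x => M.xD x = d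

/-- `Y_h` : the contracts in `Y` involving hospital `h`. -/
def hospPart (M : Market D H X) (Y : Finset X) (h : H) : Finset X :=
  Y.filter fun x => M.xH x = h

/-- An allocation: distinct contracts involve distinct doctors. -/
def IsAllocation (M : Market D H X) (Z : Finset X) : Prop :=
  ∀ x ∈ Z, ∀ y ∈ Z, M.xD x = M.xD y → x = y

/-- `A(Y)` : the allocations contained in `Y`. -/
def allocs (M : Market D H X) (Y : Finset X) : Finset (Finset X) :=
  Y.powerset.filter fun Z => ∀ x ∈ Z, ∀ y ∈ Z, M.xD x = M.xD y → x = y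

lemma empty_mem_allocs (M : Market D H X) (Y : Finset X) : ∅ ∈ allocs M Y := by
  simp [allocs]

/-- The best allocation contained in `Y` according to the linear order `pr`. -/
def bestAlloc (M : Market D H X) (pr : Pref X) (Y : Finset X) : Finset X :=
  @Finset.max' _ pr (allocs M Y) ⟨∅, empty_mem_allocs M Y⟩

/-- `C_h(Y)` : hospital `h`'s choice set from `Y` (the `≻_h`-maximum of `A(Y_h)`). -/
def Ch (M : Market D H X) (h : H) (Y : Finset X) : Finset X :=
  bestAlloc M (M.prH h) (hospPart M Y h)

/-- `C_d(P_d, Y)` : doctor `d`'s choice set from `Y` (the `P_d`-maximum of `A(Y_d)`). -/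
def Cd (M : Market D H X) (Pd : Pref X) (d : D) (Y : Finset X) : Finset X :=
  bestAlloc M Pd (docPart M Y d)

/-- `C_H(Y) = ∪_{h ∈ H} C_h(Y)`. -/
def CH (M : Market D H X) (Y : Finset X) : Finset X :=
  univ.biUnion fun h => Ch M h Y

/-- `C_D(Y) = ∪_{d ∈ D} C_d(Y)`. -/
def CD (M : Market D H X) (P : Profile D X) (Y : Finset X) : Finset X :=
  univ.biUnion fun d => Cd M (P d) d Y

/-- Substitutability of hospital `h`'s preference: `x ∈ C_h(W)` and `x ∈ Y_h ⊆ W_h`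
imply `x ∈ C_h(Y)`. -/
def Substitutable (M : Market D H X) (h : H) : Prop :=
  ∀ W Y : Finset X, hospPart M Y h ⊆ hospPart M W h →
    ∀ x ∈ hospPart M Y h, x ∈ Ch M h W → x ∈ Ch M h Y

/-- The sets `X^t` of still-available contracts in the doctor-proposing deferred
acceptance algorithm (0-based: index `t` corresponds to iteration `t+1`). -/
def DDAsets (M : Market D H X) (P : Profile D X) : ℕ → Finset X
  | 0 => univ
  | t + 1 =>
      DDAsets M P t \ (CD M P (DDAsets M P t) \ CH M (CD M P (DDAsets M P t)))

/-- `O^t` : the offers made by the doctors at iteration `t` of D-DA (0-based). -/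
def offers (M : Market D H X) (P : Profile D X) (t : ℕ) : Finset X :=
  CD M P (DDAsets M P t)

/-- `O_A^t = ∪_{k ≤ t} O^k` : the accumulated offers up to iteration `t` (0-based). -/
def accOffers (M : Market D H X) (P : Profile D X) (t : ℕ) : Finset X :=
  (Finset.range (t + 1)).biUnion fun k => offers M P k

/-- D-DA has stopped at iteration `t`: all offers are accepted. -/
def DDAstopped (M : Market D H X) (P : Profile D X) (t : ℕ) : Prop :=
  CH M (offers M P t) = offers M P t

/-- The (0-based) last iteration of D-DA, i.e. `T - 1` where `T` is the number of
iterations of D-DA. -/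
noncomputable def DDAlast (M : Market D H X) (P : Profile D X) : ℕ :=
  sInf {t | DDAstopped M P t}

/-- The output of D-DA (the algorithm provably stops by iteration `Fintype.card X`,
and once stopped the offer sets stay constant). -/
def DDAoutput (M : Market D H X) (P : Profile D X) : Finset X :=
  CH M (offers M P (Fintype.card X))

/-- The doctor-optimal rule `φ̄`, giving doctor `d`'s outcome `φ̄_d(P)` (an element of
`A(𝐗_d)`, i.e. `∅` or a singleton). -/
def docOpt (M : Market D H X) (P : Profile D X) (d : D) : Finset X :=
  docPart M (DDAoutput M P) d

/-- The sets `X^t` of still-available contracts in the hospital-proposing deferred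
acceptance algorithm (0-based). -/
def HDAsets (M : Market D H X) (P : Profile D X) : ℕ → Finset X
  | 0 => univ
  | t + 1 =>
      HDAsets M P t \ (CH M (HDAsets M P t) \ CD M P (CH M (HDAsets M P t)))

/-- The offers made by the hospitals at iteration `t` of H-DA (0-based). -/
def hOffers (M : Market D H X) (P : Profile D X) (t : ℕ) : Finset X :=
  CH M (HDAsets M P t)

/-- The output of H-DA. -/
def HDAoutput (M : Market D H X) (P : Profile D X) : Finset X :=
  CD M P (hOffers M P (Fintype.card X))

/-- The hospital-optimal rule `φ̲`, giving doctor `d`'s outcome `φ̲_d(P)`. -/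
def hospOpt (M : Market D H X) (P : Profile D X) (d : D) : Finset X :=
  docPart M (HDAoutput M P) d

/-- The option set `O^φ(P_d)` left open by `P_d` at the rule `φ`. -/
def optionSet (rule : Profile D X → D → Finset X) (d : D) (Pd : Pref X) :
    Set (Finset X) :=
  {S | ∃ P : Profile D X, P d = Pd ∧ S = rule P d}

open scoped Classical in
/-- `W_d(pr, S)` : the `pr`-worst element of the (finite) set `S` of outcomes. -/
noncomputable def worstIn (pr : Pref X) (S : Set (Finset X)) : Finset X :=
  if h : S.Nonempty then
    @Finset.min' _ pr (Set.toFinite S).toFinset ((Set.Finite.toFinset_nonempty _).mpr h)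
  else ∅

open scoped Classical in
/-- The `pr`-best element of the (finite) set `S` of outcomes. -/
noncomputable def bestIn (pr : Pref X) (S : Set (Finset X)) : Finset X :=
  if h : S.Nonempty then
    @Finset.max' _ pr (Set.toFinite S).toFinset ((Set.Finite.toFinset_nonempty _).mpr h)
  else ∅

/-- `P'_d` is a manipulation of the rule at `P_d` : for some subprofile of the other
doctors, reporting `P'_d` gives a strictly `P_d`-better outcome than truth-telling. -/
def IsManip (rule : Profile D X → D → Finset X) (d : D) (Pd P'd : Pref X) : Prop :=
  ∃ P : Profile D X, P d = Pd ∧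
    Pd.lt (rule P d) (rule (Function.update P d P'd) d)

/-- `P'_d` is an obvious manipulation of the rule at `P_d`. -/
def IsObviousManip (rule : Profile D X → D → Finset X) (d : D) (Pd P'd : Pref X) :
    Prop :=
  IsManip rule d Pd P'd ∧
    (Pd.lt (worstIn Pd (optionSet rule d Pd)) (worstIn Pd (optionSet rule d P'd)) ∨
     Pd.lt (bestIn Pd (optionSet rule d Pd)) (bestIn Pd (optionSet rule d P'd)))

/-- A rule is not obviously manipulable (NOM). -/
def NOM (rule : Profile D X → D → Finset X) : Prop :=
  ∀ (d : D) (Pd P'd : Pref X), ¬ IsObviousManip rule d Pd P'd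

/-- A rule is obviously manipulable (OM). -/
def OM (rule : Profile D X → D → Finset X) : Prop :=
  ∃ (d : D) (Pd P'd : Pref X), IsObviousManip rule d Pd P'd

/-- `Y` is a stable allocation at the profile `P` : it is an individually rational
allocation and admits no blocking contract. -/
def IsStable (M : Market D H X) (P : Profile D X) (Y : Finset X) : Prop :=
  IsAllocation M Y ∧ CD M P Y = Y ∧ CH M Y = Y ∧
    ∀ x : X, x ∉ Y →
      ¬ (x ∈ Cd M (P (M.xD x)) (M.xD x) (insert x Y) ∧
         x ∈ Ch M (M.xH x) (insert x Y))

/-- `⌈kq⌉` where `k` is the number of stable allocations at `P`. -/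
noncomputable def quantileIndex (M : Market D H X) (P : Profile D X) (q : ℝ) : ℕ :=
  ⌈(Set.ncard {Y : Finset X | IsStable M P Y} : ℝ) * q⌉₊

/-- `Z` is doctor `d`'s `⌈kq⌉`-th best outcome (according to `P d`) among the `k` stable
allocations at `P` : it is the outcome of some stable allocation, strictly fewer than
`⌈kq⌉` stable allocations give `d` a strictly better outcome, and at least `⌈kq⌉` stable
allocations give `d` a weakly better outcome. -/
def IsQuantileOutcome (M : Market D H X) (P : Profile D X) (q : ℝ) (d : D)
    (Z : Finset X) : Prop :=
  (∃ Y : Finset X, IsStable M P Y ∧ docPart M Y d = Z) ∧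
    Set.ncard {Y : Finset X | IsStable M P Y ∧ (P d).lt Z (docPart M Y d)} <
      quantileIndex M P q ∧
    quantileIndex M P q ≤
      Set.ncard {Y : Finset X | IsStable M P Y ∧ (P d).le Z (docPart M Y d)}

/-! ### Auxiliary development -/

section Aux

variable {M : Market D H X}

lemma mem_allocs {Y Z : Finset X} :
    Z ∈ allocs M Y ↔ Z ⊆ Y ∧ ∀ x ∈ Z, ∀ y ∈ Z, M.xD x = M.xD y → x = y := by
  simp [allocs, Finset.mem_filter, Finset.mem_powerset]

lemma bestAlloc_mem (pr : Pref X) (Y : Finset X) :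
    bestAlloc M pr Y ∈ allocs M Y :=
  @Finset.max'_mem _ pr _ _

lemma le_bestAlloc (pr : Pref X) {Y Z : Finset X} (hZ : Z ∈ allocs M Y) :
    pr.le Z (bestAlloc M pr Y) :=
  @Finset.le_max' _ pr _ _ hZ

lemma bestAlloc_le (pr : Pref X) {Y S : Finset X}
    (hmax : ∀ Z ∈ allocs M Y, pr.le Z S) :
    pr.le (bestAlloc M pr Y) S :=
  hmax _ (bestAlloc_mem pr Y)

lemma bestAlloc_eq_of (pr : Pref X) {Y S : Finset X} (hmem : S ∈ allocs M Y)
    (hmax : ∀ Z ∈ allocs M Y, pr.le Z S) : bestAlloc M pr Y = S :=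
  @le_antisymm _ (@LinearOrder.toPartialOrder _ pr)
    _ _ (hmax _ (bestAlloc_mem pr Y)) (le_bestAlloc pr hmem)

lemma bestAlloc_subset (pr : Pref X) (Y : Finset X) : bestAlloc M pr Y ⊆ Y :=
  (mem_allocs.mp (bestAlloc_mem pr Y)).1

lemma empty_le_bestAlloc (pr : Pref X) (Y : Finset X) :
    pr.le ∅ (bestAlloc M pr Y) :=
  le_bestAlloc pr (empty_mem_allocs M Y)

lemma bestAlloc_empty (pr : Pref X) : bestAlloc M pr (∅ : Finset X) = ∅ :=
  bestAlloc_eq_of pr (empty_mem_allocs M ∅)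
    (fun Z hZ => by
      have : Z = ∅ := Finset.subset_empty.mp (mem_allocs.mp hZ).1
      subst this; exact @le_refl _ (@PartialOrder.toPreorder _ (@LinearOrder.toPartialOrder _ pr)) _)

/-! #### docPart / hospPart -/

lemma mem_docPart {Y : Finset X} {d : D} {x : X} :
    x ∈ docPart M Y d ↔ x ∈ Y ∧ M.xD x = d := Finset.mem_filter

lemma mem_hospPart {Y : Finset X} {h : H} {x : X} :
    x ∈ hospPart M Y h ↔ x ∈ Y ∧ M.xH x = h := Finset.mem_filter

lemma docPart_subset (Y : Finset X) (d : D) : docPart M Y d ⊆ Y :=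
  Finset.filter_subset _ _

lemma hospPart_subset (Y : Finset X) (h : H) : hospPart M Y h ⊆ Y :=
  Finset.filter_subset _ _

lemma docPart_mono {Y Y' : Finset X} (d : D) (hYY : Y ⊆ Y') :
    docPart M Y d ⊆ docPart M Y' d :=
  Finset.filter_subset_filter _ hYY

lemma hospPart_mono {Y Y' : Finset X} (h : H) (hYY : Y ⊆ Y') :
    hospPart M Y h ⊆ hospPart M Y' h :=
  Finset.filter_subset_filter _ hYY

/-! #### Cd -/

lemma Cd_subset_docPart (Pd : Pref X) (d : D) (Y : Finset X) :
    Cd M Pd d Y ⊆ docPart M Y d :=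
  bestAlloc_subset _ _

lemma Cd_subset (Pd : Pref X) (d : D) (Y : Finset X) : Cd M Pd d Y ⊆ Y :=
  (Cd_subset_docPart Pd d Y).trans (docPart_subset Y d)

lemma Cd_cases (Pd : Pref X) (d : D) (Y : Finset X) :
    Cd M Pd d Y = ∅ ∨ ∃ c, M.xD c = d ∧ c ∈ Y ∧ Cd M Pd d Y = {c} := by
  rcases Finset.eq_empty_or_nonempty (Cd M Pd d Y) with h | ⟨c, hc⟩
  · exact Or.inl h
  · refine Or.inr ⟨c, ?_, ?_, ?_⟩
    · exact (mem_docPart.mp (Cd_subset_docPart Pd d Y hc)).2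
    · exact Cd_subset Pd d Y hc
    · have halloc := bestAlloc_mem (M := M) Pd (docPart M Y d)
      rw [mem_allocs] at halloc
      apply Finset.eq_singleton_iff_unique_mem.mpr
      refine ⟨hc, fun y hy => ?_⟩
      have hyd := (mem_docPart.mp (Cd_subset_docPart Pd d Y hy)).2
      have hcd := (mem_docPart.mp (Cd_subset_docPart Pd d Y hc)).2
      exact halloc.2 y hy c hc (hyd.trans hcd.symm)

lemma singleton_mem_allocs_docPart {Y : Finset X} {d : D} {c : X}
    (hc : c ∈ Y) (hcd : M.xD c = d) : ({c} : Finset X) ∈ allocs M (docPart M Y d) := by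
  rw [mem_allocs]
  refine ⟨Finset.singleton_subset_iff.mpr (mem_docPart.mpr ⟨hc, hcd⟩), ?_⟩
  simp

lemma le_Cd (Pd : Pref X) (d : D) {Y Z : Finset X}
    (hZ : Z ∈ allocs M (docPart M Y d)) : Pd.le Z (Cd M Pd d Y) :=
  le_bestAlloc Pd hZ

lemma empty_le_Cd (Pd : Pref X) (d : D) (Y : Finset X) :
    Pd.le ∅ (Cd M Pd d Y) :=
  empty_le_bestAlloc Pd _

lemma Cd_mono (Pd : Pref X) (d : D) {Y Y' : Finset X} (hYY : Y ⊆ Y') :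
    Pd.le (Cd M Pd d Y) (Cd M Pd d Y') := by
  apply le_Cd
  have hsub := docPart_mono (M := M) d hYY
  have h := bestAlloc_mem (M := M) Pd (docPart M Y d)
  rw [mem_allocs] at h ⊢
  exact ⟨h.1.trans hsub, h.2⟩

lemma Cd_singleton_of_mem (Pd : Pref X) (d : D) {Y : Finset X} {c : X}
    (hc : c ∈ Cd M Pd d Y) : Cd M Pd d Y = {c} := by
  rcases Cd_cases (M := M) Pd d Y with h | ⟨c', _, _, h⟩
  · rw [h] at hc; exact absurd hc (Finset.notMem_empty c)
  · rw [h] at hc ⊢; rw [Finset.mem_singleton] at hc; rw [hc]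

/-! #### Ch / CH / CD -/

lemma Ch_subset_hospPart (h : H) (Y : Finset X) :
    Ch M h Y ⊆ hospPart M Y h :=
  bestAlloc_subset _ _

lemma Ch_subset (h : H) (Y : Finset X) : Ch M h Y ⊆ Y :=
  (Ch_subset_hospPart h Y).trans (hospPart_subset Y h)

lemma Ch_congr {h : H} {Y Y' : Finset X}
    (hYY : hospPart M Y h = hospPart M Y' h) : Ch M h Y = Ch M h Y' := by
  unfold Ch; rw [hYY]

/-- The sandwich lemma: if `Ch(Y) ⊆ Y' (at h)` and `Y'_h ⊆ Y_h` then `Ch(Y') = Ch(Y)`. -/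
lemma Ch_sandwich {h : H} {Y Y' : Finset X}
    (h1 : hospPart M Y' h ⊆ hospPart M Y h)
    (h2 : Ch M h Y ⊆ hospPart M Y' h) : Ch M h Y' = Ch M h Y := by
  have hY := bestAlloc_mem (M := M) (M.prH h) (hospPart M Y h)
  have hY' := bestAlloc_mem (M := M) (M.prH h) (hospPart M Y' h)
  rw [mem_allocs] at hY hY'
  apply @le_antisymm _ (@LinearOrder.toPartialOrder _ (M.prH h))
  · exact le_bestAlloc _ (mem_allocs.mpr ⟨hY'.1.trans h1, hY'.2⟩)
  · exact le_bestAlloc _ (mem_allocs.mpr ⟨h2, hY.2⟩)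

lemma mem_CH {Y : Finset X} {x : X} :
    x ∈ CH M Y ↔ x ∈ Ch M (M.xH x) Y := by
  constructor
  · intro hx
    rcases Finset.mem_biUnion.mp hx with ⟨h, -, hxh⟩
    have : M.xH x = h := (mem_hospPart.mp (Ch_subset_hospPart h Y hxh)).2
    rwa [this]
  · intro hx
    exact Finset.mem_biUnion.mpr ⟨M.xH x, Finset.mem_univ _, hx⟩

lemma CH_subset (Y : Finset X) : CH M Y ⊆ Y := by
  intro x hx
  exact Ch_subset _ _ (mem_CH.mp hx)

lemma hospPart_CH (Y : Finset X) (h : H) : hospPart M (CH M Y) h = Ch M h Y := by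
  ext x
  rw [mem_hospPart]
  constructor
  · rintro ⟨hx, hxh⟩
    rw [mem_CH] at hx; rwa [hxh] at hx
  · intro hx
    have hxh : M.xH x = h := (mem_hospPart.mp (Ch_subset_hospPart h Y hx)).2
    refine ⟨mem_CH.mpr ?_, hxh⟩
    rwa [hxh]

lemma mem_CD {P : Profile D X} {Y : Finset X} {x : X} :
    x ∈ CD M P Y ↔ x ∈ Cd M (P (M.xD x)) (M.xD x) Y := by
  constructor
  · intro hx
    rcases Finset.mem_biUnion.mp hx with ⟨e, -, hxe⟩
    have : M.xD x = e := (mem_docPart.mp (Cd_subset_docPart _ e Y hxe)).2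
    rwa [this]
  · intro hx
    exact Finset.mem_biUnion.mpr ⟨M.xD x, Finset.mem_univ _, hx⟩

lemma docPart_CD (P : Profile D X) (Y : Finset X) (d : D) :
    docPart M (CD M P Y) d = Cd M (P d) d Y := by
  ext x
  rw [mem_docPart]
  constructor
  · rintro ⟨hx, hxd⟩
    rw [mem_CD] at hx; rwa [hxd] at hx
  · intro hx
    have hxd : M.xD x = d := (mem_docPart.mp (Cd_subset_docPart _ d Y hx)).2
    refine ⟨mem_CD.mpr ?_, hxd⟩
    rwa [hxd]

lemma CD_subset (P : Profile D X) (Y : Finset X) : CD M P Y ⊆ Y := by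
  intro x hx
  exact Cd_subset _ _ _ (mem_CD.mp hx)

lemma CD_empty (P : Profile D X) : CD M P (∅ : Finset X) = ∅ :=
  Finset.subset_empty.mp (CD_subset P ∅)

lemma CH_empty : CH M (∅ : Finset X) = ∅ :=
  Finset.subset_empty.mp (CH_subset ∅)

/-- A rejected newcomer changes nothing. -/
lemma Ch_insert_of_not_mem {h : H} {Y : Finset X} {z : X}
    (hz : z ∉ Ch M h (insert z Y)) : Ch M h (insert z Y) = Ch M h Y := by
  refine (Ch_sandwich (hospPart_mono h (Finset.subset_insert z Y)) ?_).symm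
  intro x hx
  have hx' := Ch_subset_hospPart h (insert z Y) hx
  rw [mem_hospPart] at hx' ⊢
  rcases Finset.mem_insert.mp hx'.1 with h' | hxY
  · subst h'; exact absurd hx hz
  · exact ⟨hxY, hx'.2⟩

end Aux
section DDA

variable {M : Market D H X}

lemma offers_subset_DDAsets (P : Profile D X) (t : ℕ) :
    offers M P t ⊆ DDAsets M P t :=
  CD_subset P _

lemma DDAsets_succ_subset (P : Profile D X) (t : ℕ) :
    DDAsets M P (t + 1) ⊆ DDAsets M P t := by
  rw [DDAsets]; exact Finset.sdiff_subset

lemma DDAsets_antitone (P : Profile D X) {s t : ℕ} (hst : s ≤ t) :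
    DDAsets M P t ⊆ DDAsets M P s := by
  induction t with
  | zero => rw [Nat.le_zero.mp hst]
  | succ n ih =>
    rcases Nat.lt_or_ge s (n + 1) with h | h
    · exact (DDAsets_succ_subset P n).trans (ih (Nat.lt_succ_iff.mp h))
    · rw [Nat.le_antisymm hst h]

lemma stopped_succ {P : Profile D X} {t : ℕ} (hs : DDAstopped M P t) :
    DDAsets M P (t + 1) = DDAsets M P t := by
  rw [DDAsets]
  unfold DDAstopped at hs
  unfold offers at hs
  rw [hs, Finset.sdiff_self, Finset.sdiff_empty]

lemma stopped_ge {P : Profile D X} {t u : ℕ} (htu : t ≤ u) (hs : DDAstopped M P t) :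
    DDAstopped M P u ∧ offers M P u = offers M P t := by
  induction u with
  | zero =>
    rw [Nat.le_zero.mp htu] at hs ⊢
    exact ⟨hs, rfl⟩
  | succ n ih =>
    rcases Nat.lt_or_ge t (n + 1) with h | h
    · obtain ⟨hsn, hon⟩ := ih (Nat.lt_succ_iff.mp h)
      have heq : DDAsets M P (n + 1) = DDAsets M P n := stopped_succ hsn
      have ho : offers M P (n + 1) = offers M P n := by
        unfold offers; rw [heq]
      constructor
      · unfold DDAstopped; rw [ho]; exact hsn
      · rw [ho, hon]
    · have : t = n + 1 := Nat.le_antisymm htu h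
      rw [← this]; exact ⟨hs, rfl⟩

lemma not_stopped_card_lt {P : Profile D X} {t : ℕ} (hs : ¬ DDAstopped M P t) :
    (DDAsets M P (t + 1)).card < (DDAsets M P t).card := by
  apply Finset.card_lt_card
  rw [Finset.ssubset_iff_of_subset (DDAsets_succ_subset P t)]
  unfold DDAstopped at hs
  have hsub : CH M (offers M P t) ⊆ offers M P t := CH_subset _
  rcases Finset.exists_of_ssubset (Finset.ssubset_iff_subset_ne.mpr ⟨hsub, fun h => hs h⟩) with ⟨y, hy1, hy2⟩
  refine ⟨y, offers_subset_DDAsets P t hy1, ?_⟩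
  rw [DDAsets, Finset.mem_sdiff]
  push_neg
  intro _
  rw [Finset.mem_sdiff]
  exact ⟨hy1, hy2⟩

lemma stopped_of_empty {P : Profile D X} {t : ℕ} (he : DDAsets M P t = ∅) :
    DDAstopped M P t := by
  unfold DDAstopped offers
  rw [he, CD_empty, CH_empty]

lemma exists_stopped (P : Profile D X) :
    ∃ t ≤ Fintype.card X, DDAstopped M P t := by
  by_contra hcon
  push_neg at hcon
  have key : ∀ t, t ≤ Fintype.card X → (DDAsets M P t).card ≤ Fintype.card X - t := by
    intro t
    induction t with
    | zero => intro _; simpa using Finset.card_le_univ _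
    | succ n ih =>
      intro hn
      have h1 := ih (Nat.le_of_succ_le hn)
      have h2 := not_stopped_card_lt (hcon n (Nat.le_of_succ_le hn))
      omega
  have := key (Fintype.card X) le_rfl
  rw [Nat.sub_self] at this
  exact hcon (Fintype.card X) le_rfl
    (stopped_of_empty (Finset.card_eq_zero.mp (Nat.le_zero.mp this)))

lemma stopped_card (P : Profile D X) : DDAstopped M P (Fintype.card X) := by
  obtain ⟨t, ht, hs⟩ := exists_stopped (M := M) P
  exact (stopped_ge ht hs).1

lemma DDAoutput_eq_offers (P : Profile D X) :
    DDAoutput M P = offers M P (Fintype.card X) :=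
  stopped_card P

lemma docPart_DDAoutput (P : Profile D X) (d : D) :
    docPart M (DDAoutput M P) d = Cd M (P d) d (DDAsets M P (Fintype.card X)) := by
  rw [DDAoutput_eq_offers]
  unfold offers
  exact docPart_CD P _ d

lemma docOpt_eq (P : Profile D X) (d : D) :
    docOpt M P d = Cd M (P d) d (DDAsets M P (Fintype.card X)) :=
  docPart_DDAoutput P d

/-- If stopped at `u`, the output is `CH (offers u)`. -/
lemma DDAoutput_eq_of_stopped {P : Profile D X} {u : ℕ} (hu : u ≤ Fintype.card X)
    (hs : DDAstopped M P u) : DDAoutput M P = CH M (offers M P u) := by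
  unfold DDAoutput
  rw [(stopped_ge hu hs).2]

/-- Members of the offer set belong to the respective doctor's choice. -/
lemma offers_eq_Cd {P : Profile D X} {t : ℕ} {y : X}
    (hy : y ∈ offers M P t) :
    Cd M (P (M.xD y)) (M.xD y) (DDAsets M P t) = {y} :=
  Cd_singleton_of_mem _ _ (mem_CD.mp hy)

/-- A contract in the offer set that is not rejected remains offered. -/
lemma offer_persists {P : Profile D X} {t : ℕ} {y : X}
    (hy : y ∈ offers M P t) (hk : y ∈ CH M (offers M P t)) :
    y ∈ offers M P (t + 1) := by
  have hyX : y ∈ DDAsets M P t := offers_subset_DDAsets P t hy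
  have hyX1 : y ∈ DDAsets M P (t + 1) := by
    rw [DDAsets]
    exact Finset.mem_sdiff.mpr ⟨hyX, fun hmem => (Finset.mem_sdiff.mp hmem).2 hk⟩
  have hCd := offers_eq_Cd hy
  have hle : (P (M.xD y)).le (Cd M (P (M.xD y)) (M.xD y) (DDAsets M P (t+1)))
      (Cd M (P (M.xD y)) (M.xD y) (DDAsets M P t)) :=
    Cd_mono _ _ (DDAsets_succ_subset P t)
  have hge : (P (M.xD y)).le ({y} : Finset X)
      (Cd M (P (M.xD y)) (M.xD y) (DDAsets M P (t+1))) :=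
    le_Cd _ _ (singleton_mem_allocs_docPart hyX1 rfl)
  rw [hCd] at hle
  have : Cd M (P (M.xD y)) (M.xD y) (DDAsets M P (t+1)) = {y} :=
    @le_antisymm _ (@LinearOrder.toPartialOrder _ (P (M.xD y))) _ _ hle hge
  apply mem_CD.mpr
  rw [this]
  exact Finset.mem_singleton_self y

/-- Contracts removed from the available set were rejected at some earlier round. -/
lemma removed_rejected {P : Profile D X} {t : ℕ} {z : X}
    (hz : z ∉ DDAsets M P t) :
    ∃ j < t, z ∈ offers M P j ∧ z ∉ CH M (offers M P j) := by
  induction t with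
  | zero => exact absurd (Finset.mem_univ z) (by rw [DDAsets] at hz; exact hz)
  | succ n ih =>
    by_cases hzn : z ∈ DDAsets M P n
    · rw [DDAsets, Finset.mem_sdiff] at hz
      push_neg at hz
      have := Finset.mem_sdiff.mp (hz hzn)
      exact ⟨n, Nat.lt_succ_self n, this.1, this.2⟩
    · obtain ⟨j, hj, h⟩ := ih hzn
      exact ⟨j, Nat.lt_succ_of_lt hj, h⟩

end DDA
section Cumulative

variable {M : Market D H X}

lemma offers_subset_accOffers (P : Profile D X) {k t : ℕ} (hkt : k ≤ t) :
    offers M P k ⊆ accOffers M P t := by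
  intro y hy
  exact Finset.mem_biUnion.mpr ⟨k, Finset.mem_range.mpr (Nat.lt_succ_of_le hkt), hy⟩

lemma accOffers_mono (P : Profile D X) {s t : ℕ} (hst : s ≤ t) :
    accOffers M P s ⊆ accOffers M P t := by
  intro y hy
  rcases Finset.mem_biUnion.mp hy with ⟨k, hk, hyk⟩
  exact offers_subset_accOffers P ((Nat.lt_succ_iff.mp (Finset.mem_range.mp hk)).trans hst) hyk

lemma accOffers_zero (P : Profile D X) : accOffers M P 0 = offers M P 0 := by
  unfold accOffers
  rw [Finset.range_one, Finset.singleton_biUnion]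

/-- Key lemma: with substitutable hospital preferences, the hospitals' choices from the
current offers coincide with their choices from the accumulated offers. -/
lemma Ch_accOffers (hsub : ∀ h : H, Substitutable M h) (P : Profile D X) :
    ∀ t (h : H), Ch M h (accOffers M P t) = Ch M h (offers M P t) := by
  intro t
  induction t using Nat.strong_induction_on with
  | _ t IH =>
    match t with
    | 0 => intro h; rw [accOffers_zero]
    | n + 1 =>
      intro h
      have hCsub : Ch M h (accOffers M P (n+1)) ⊆ hospPart M (offers M P (n+1)) h := by
        intro y hy
        have hyh := Ch_subset_hospPart h _ hy
        rw [mem_hospPart] at hyh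
        obtain ⟨hyacc, hyH⟩ := hyh
        rcases Finset.mem_biUnion.mp hyacc with ⟨k, hk, hyk⟩
        have hk' : k ≤ n + 1 := Nat.lt_succ_iff.mp (Finset.mem_range.mp hk)
        -- y stays offered from round k onwards
        have step : ∀ j, j ≤ n → y ∈ offers M P j → y ∈ offers M P (j+1) := by
          intro j hj hyj
          by_cases hCH : y ∈ CH M (offers M P j)
          · exact offer_persists hyj hCH
          · exfalso
            have h1 : y ∉ Ch M h (offers M P j) := by
              intro hc
              exact hCH (mem_CH.mpr (by rwa [hyH]))
            rw [← IH j (Nat.lt_succ_of_le hj) h] at h1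
            apply h1
            refine hsub h (accOffers M P (n+1)) (accOffers M P j)
              (hospPart_mono h (accOffers_mono P (Nat.le_succ_of_le hj))) y ?_ hy
            exact mem_hospPart.mpr ⟨offers_subset_accOffers P le_rfl hyj, hyH⟩
        have climb : ∀ m, k + m ≤ n + 1 → y ∈ offers M P (k + m) := by
          intro m
          induction m with
          | zero => intro _; exact hyk
          | succ l ihl =>
            intro hle
            have h1 : k + l ≤ n := by omega
            have h2 := step (k + l) h1 (ihl (by omega))
            have h3 : k + l + 1 = k + (l + 1) := by omega
            rwa [h3] at h2
        have := climb (n + 1 - k) (by omega)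
        rw [Nat.add_sub_cancel' hk'] at this
        exact mem_hospPart.mpr ⟨this, hyH⟩
      exact (Ch_sandwich (hospPart_mono h (offers_subset_accOffers P le_rfl)) hCsub).symm

/-- Rejections persist at the level of accumulated offers. -/
lemma reject_persists (hsub : ∀ h : H, Substitutable M h) (P : Profile D X)
    {j s : ℕ} (hjs : j ≤ s) {z : X} (hzj : z ∈ offers M P j)
    (hrej : z ∉ CH M (offers M P j)) :
    z ∉ Ch M (M.xH z) (accOffers M P s) := by
  intro hc
  apply hrej
  apply mem_CH.mpr
  rw [← Ch_accOffers hsub P j (M.xH z)]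
  refine hsub (M.xH z) (accOffers M P s) (accOffers M P j)
    (hospPart_mono _ (accOffers_mono P hjs)) z ?_ hc
  exact mem_hospPart.mpr ⟨offers_subset_accOffers P le_rfl hzj, rfl⟩

end Cumulative
section PrefConstr

variable {M : Market D H X}

/-- An injective encoding of `Finset X` into `ℕ`. -/
noncomputable def fenc (X : Type*) [DecidableEq X] [Fintype X] : Finset X → ℕ :=
  fun Z => ((Fintype.equivFin (Finset X)) Z : ℕ)

lemma fenc_injective : Function.Injective (fenc X) := by
  intro a b hab
  exact (Fintype.equivFin (Finset X)).injective (Fin.val_injective hab)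

/-- A linear order on `Finset X` determined primarily by a priority function `g`
(smaller `g` = better, i.e. larger in the order... we put smaller `g` on top by
reversing). We define: `a ≤ b ↔ key b ≤lex key a` via `OrderDual`-style by using
`g`-values directly: we build the order so that `g a < g b → b < a`. -/
noncomputable def mkPref (g : Finset X → ℕ) : Pref X :=
  @LinearOrder.lift' (Finset X) (ℕ ×ₗ ℕ)ᵒᵈ _
    (fun Z => OrderDual.toDual (toLex ((g Z, fenc X Z) : ℕ × ℕ)))
    (by
      intro a b hab
      have h1 := OrderDual.toDual.injective hab
      have h2 : ((g a, fenc X a) : ℕ × ℕ) = (g b, fenc X b) := toLex.injective h1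
      exact fenc_injective (congrArg Prod.snd h2))

lemma mkPref_lt_of {g : Finset X → ℕ} {a b : Finset X} (hg : g b < g a) :
    (mkPref g).lt a b := by
  show OrderDual.toDual (toLex ((g a, fenc X a) : ℕ × ℕ)) <
    OrderDual.toDual (toLex ((g b, fenc X b) : ℕ × ℕ))
  rw [OrderDual.toDual_lt_toDual]
  exact Prod.Lex.lt_iff.mpr (Or.inl hg)

lemma mkPref_le_of {g : Finset X → ℕ} {a b : Finset X} (hg : g b < g a ∨ a = b) :
    (mkPref g).le a b := by
  rcases hg with hg | rfl
  · exact @le_of_lt _ (@PartialOrder.toPreorder _ (@LinearOrder.toPartialOrder _ (mkPref g)))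
      _ _ (mkPref_lt_of hg)
  · exact @le_refl _ (@PartialOrder.toPreorder _ (@LinearOrder.toPartialOrder _ (mkPref g))) _

/-- The preference demanding exactly the set `S` (top), with `∅` second. -/
noncomputable def demandPref (S : Finset X) : Pref X :=
  mkPref (fun Z => if Z = S then 0 else if Z = ∅ then 1 else 2)

lemma Cd_demandPref_of_mem {S : Finset X} {e : D} {Y : Finset X}
    (hS : S ∈ allocs M (docPart M Y e)) :
    Cd M (demandPref S) e Y = S := by
  apply bestAlloc_eq_of _ hS
  intro Z hZ
  apply mkPref_le_of
  by_cases hZS : Z = S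
  · exact Or.inr hZS
  · refine Or.inl ?_
    show (if S = S then 0 else if S = ∅ then 1 else 2) <
      (if Z = S then 0 else if Z = ∅ then 1 else 2)
    rw [if_pos rfl, if_neg hZS]
    split <;> omega

lemma Cd_demandPref_of_not_mem {S : Finset X} {e : D} {Y : Finset X}
    (hS : S ∉ allocs M (docPart M Y e)) :
    Cd M (demandPref S) e Y = ∅ := by
  apply bestAlloc_eq_of _ (empty_mem_allocs M _)
  intro Z hZ
  apply mkPref_le_of
  by_cases hZe : Z = ∅
  · exact Or.inr hZe
  · refine Or.inl ?_
    have hZS : Z ≠ S := fun h => hS (h ▸ hZ)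
    show (if (∅ : Finset X) = S then 0 else if (∅ : Finset X) = ∅ then 1 else 2) <
      (if Z = S then 0 else if Z = ∅ then 1 else 2)
    rw [if_neg hZS, if_neg hZe, if_pos rfl]
    split <;> omega

/-- For `S` of the right shape, `Cd` of `demandPref S` is `S ∩ Y`-like:
if `S = ∅` or `S = {c}` with `xD c = e`, then `Cd = S` when `S ⊆ Y`, else `∅`. -/
lemma Cd_demandPref_empty (e : D) (Y : Finset X) :
    Cd M (demandPref (∅ : Finset X)) e Y = ∅ :=
  Cd_demandPref_of_mem (empty_mem_allocs M _)

lemma Cd_demandPref_singleton {c : X} {e : D} (hce : M.xD c = e) (Y : Finset X) :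
    Cd M (demandPref ({c} : Finset X)) e Y = if c ∈ Y then {c} else ∅ := by
  split
  · next hc => exact Cd_demandPref_of_mem (singleton_mem_allocs_docPart hc hce)
  · next hc =>
    apply Cd_demandPref_of_not_mem
    intro hmem
    exact hc (docPart_subset Y e ((mem_allocs.mp hmem).1 (Finset.mem_singleton_self c)))

end PrefConstr
section StaticRun

variable {M : Market D H X}

lemma Cd_congr_docPart (Pd : Pref X) (d : D) {Y Y' : Finset X}
    (h : docPart M Y d = docPart M Y' d) : Cd M Pd d Y = Cd M Pd d Y' := by
  unfold Cd; rw [h]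

lemma docPart_alloc_cases {W : Finset X} (hW : IsAllocation M W) (e : D) :
    docPart M W e = ∅ ∨ ∃ c, M.xD c = e ∧ c ∈ W ∧ docPart M W e = {c} := by
  rcases Finset.eq_empty_or_nonempty (docPart M W e) with h | ⟨c, hc⟩
  · exact Or.inl h
  · obtain ⟨hcW, hce⟩ := mem_docPart.mp hc
    refine Or.inr ⟨c, hce, hcW, Finset.eq_singleton_iff_unique_mem.mpr ⟨hc, fun y hy => ?_⟩⟩
    obtain ⟨hyW, hye⟩ := mem_docPart.mp hy
    exact hW y hyW c hcW (hye.trans hce.symm)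

lemma Ch_eq_hospPart_of_IR {W : Finset X} (hWIR : CH M W = W) (h : H) :
    Ch M h W = hospPart M W h := by
  rw [← hospPart_CH W h, hWIR]

variable (M) in
/-- The static profile: `d` reports `P''d`, every other doctor demands its `W`-contract. -/
noncomputable def statProfile (d : D) (W : Finset X) (P''d : Pref X) : Profile D X :=
  fun e => if e = d then P''d else demandPref (docPart M W e)

variable (M) in
/-- The set of outcomes available to `d` against the static profile. -/
def TW (d : D) (W : Finset X) : Finset (Finset X) :=
  insert ∅ ((Finset.univ.filter fun z => M.xD z = d ∧ z ∈ Ch M (M.xH z) (insert z W)).image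
    fun z => ({z} : Finset X))

lemma mem_TW {d : D} {W E : Finset X} :
    E ∈ TW M d W ↔ E = ∅ ∨ ∃ z, M.xD z = d ∧ z ∈ Ch M (M.xH z) (insert z W) ∧ E = {z} := by
  simp only [TW, Finset.mem_insert, Finset.mem_image, Finset.mem_filter, Finset.mem_univ,
    true_and]
  constructor
  · rintro (h | ⟨z, ⟨h1, h2⟩, h3⟩)
    · exact Or.inl h
    · exact Or.inr ⟨z, h1, h2, h3.symm⟩
  · rintro (h | ⟨z, h1, h2, h3⟩)
    · exact Or.inl h
    · exact Or.inr ⟨z, ⟨h1, h2⟩, h3.symm⟩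

lemma TW_nonempty (d : D) (W : Finset X) : (TW M d W).Nonempty :=
  ⟨∅, Finset.mem_insert_self _ _⟩

variable (M) in
/-- The best element of `TW` according to `P''d`. -/
noncomputable def TWmax (d : D) (W : Finset X) (P''d : Pref X) : Finset X :=
  @Finset.max' _ P''d (TW M d W) (TW_nonempty d W)

lemma TWmax_eq {d : D} {W E : Finset X} {P''d : Pref X} (hmem : E ∈ TW M d W)
    (hmax : ∀ F ∈ TW M d W, P''d.le F E) : TWmax M d W P''d = E :=
  @le_antisymm _ (@LinearOrder.toPartialOrder _ P''d) _ _
    (@Finset.max'_le _ P''d _ _ _ hmax) (@Finset.le_max' _ P''d _ _ hmem)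

lemma empty_mem_TW (d : D) (W : Finset X) : (∅ : Finset X) ∈ TW M d W :=
  Finset.mem_insert_self _ _

/-- Offers at any round of the static run. -/
lemma statOffers {d : D} {W : Finset X} {P''d : Pref X}
    (hWalloc : IsAllocation M W) (hWd : docPart M W d = ∅) (t : ℕ) :
    offers M (statProfile M d W P''d) t =
      (W ∩ DDAsets M (statProfile M d W P''d) t) ∪
        Cd M P''d d (DDAsets M (statProfile M d W P''d) t) := by
  set P := statProfile M d W P''d with hP
  set Y := DDAsets M P t
  ext x
  rw [offers, mem_CD, Finset.mem_union, Finset.mem_inter]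
  by_cases hxd : M.xD x = d
  · rw [hxd]
    have : P d = P''d := if_pos rfl
    rw [this]
    constructor
    · intro h; exact Or.inr h
    · rintro (⟨hxW, -⟩ | h)
      · exact absurd (mem_docPart.mpr ⟨hxW, hxd⟩)
          (by rw [hWd]; exact Finset.notMem_empty x)
      · exact h
  · have hPx : P (M.xD x) = demandPref (docPart M W (M.xD x)) := if_neg hxd
    rw [hPx]
    have hnotCd : x ∉ Cd M P''d d Y := fun h =>
      hxd (mem_docPart.mp (Cd_subset_docPart P''d d Y h)).2
    rcases docPart_alloc_cases hWalloc (M.xD x) with hdp | ⟨c, hce, hcW, hdp⟩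
    · rw [hdp, Cd_demandPref_empty]
      constructor
      · intro h; exact absurd h (Finset.notMem_empty x)
      · rintro (⟨hxW, -⟩ | h)
        · exact absurd (mem_docPart.mpr ⟨hxW, rfl⟩)
            (by rw [hdp]; exact Finset.notMem_empty x)
        · exact absurd h hnotCd
    · rw [hdp, Cd_demandPref_singleton hce]
      constructor
      · intro h
        split at h
        · next hcY =>
          rw [Finset.mem_singleton] at h; subst h
          exact Or.inl ⟨hcW, hcY⟩
        · exact absurd h (Finset.notMem_empty x)
      · rintro (⟨hxW, hxY⟩ | h)
        · have : x ∈ docPart M W (M.xD x) := mem_docPart.mpr ⟨hxW, rfl⟩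
          rw [hdp, Finset.mem_singleton] at this; subst this
          rw [if_pos hxY]; exact Finset.mem_singleton_self x
        · exact absurd h hnotCd

/-- `CH` of `W` plus a rejected newcomer equals `W`. -/
lemma CH_insert_not_survive {d : D} {W : Finset X} (hWIR : CH M W = W) {z : X}
    (hzd : M.xD z = d) (hzW : z ∉ W)
    (hns : z ∉ Ch M (M.xH z) (insert z W)) : CH M (insert z W) = W := by
  ext x
  rw [mem_CH]
  by_cases hxh : M.xH x = M.xH z
  · rw [hxh, Ch_insert_of_not_mem hns, Ch_eq_hospPart_of_IR hWIR]
    constructor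
    · intro h; exact (mem_hospPart.mp h).1
    · intro h; exact mem_hospPart.mpr ⟨h, hxh⟩
  · have hcongr : Ch M (M.xH x) (insert z W) = Ch M (M.xH x) W := by
      apply Ch_congr
      unfold hospPart
      rw [Finset.filter_insert, if_neg (fun hc => hxh hc.symm)]
    rw [hcongr, Ch_eq_hospPart_of_IR hWIR]
    constructor
    · intro h; exact (mem_hospPart.mp h).1
    · intro h; exact mem_hospPart.mpr ⟨h, rfl⟩

/-- `CH` of `W` plus an accepted newcomer. -/
lemma CH_insert_survive {W : Finset X} (hWIR : CH M W = W) {z : X}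
    (hz : z ∈ Ch M (M.xH z) (insert z W)) : CH M (insert z W) =
      Ch M (M.xH z) (insert z W) ∪ W.filter (fun x => M.xH x ≠ M.xH z) := by
  ext x
  rw [mem_CH, Finset.mem_union, Finset.mem_filter]
  by_cases hxh : M.xH x = M.xH z
  · rw [hxh]
    constructor
    · intro h; exact Or.inl h
    · rintro (h | ⟨-, h⟩)
      · exact h
      · exact absurd rfl (hxh ▸ h)
  · have hcongr : Ch M (M.xH x) (insert z W) = Ch M (M.xH x) W := by
      apply Ch_congr
      unfold hospPart
      rw [Finset.filter_insert, if_neg (fun hc => hxh hc.symm)]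
    rw [hcongr, Ch_eq_hospPart_of_IR hWIR]
    constructor
    · intro h; exact Or.inr ⟨(mem_hospPart.mp h).1, hxh⟩
    · rintro (h | ⟨h, -⟩)
      · have := (mem_hospPart.mp (Ch_subset_hospPart (M.xH z) (insert z W) h)).2
        exact absurd this hxh
      · exact mem_hospPart.mpr ⟨h, rfl⟩

end StaticRun
section StaticMain

variable {M : Market D H X}

/-- Main static-run lemma: against the static profile built from `W`, doctor `d`
reporting `P''d` obtains exactly the `P''d`-best element of `TW M d W`. -/
lemma union_singleton_eq_insert (s : Finset X) (a : X) : s ∪ {a} = insert a s := by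
  ext x; simp [or_comm]

lemma staticRun {d : D} {W : Finset X} (P''d : Pref X)
    (hWalloc : IsAllocation M W) (hWd : docPart M W d = ∅) (hWIR : CH M W = W) :
    docOpt M (statProfile M d W P''d) d = TWmax M d W P''d := by
  set P := statProfile M d W P''d with hP
  set N := Fintype.card X with hN
  set DoneAt : ℕ → Prop := fun u => DDAstopped M P u ∧
    docPart M (CH M (offers M P u)) d = TWmax M d W P''d with hDone
  have hsurv_mem : ∀ t, (∀ y, y ∉ DDAsets M P t → M.xD y = d ∧ y ∉ Ch M (M.xH y) (insert y W)) →
      ∀ y : X, M.xD y = d → y ∈ Ch M (M.xH y) (insert y W) → y ∈ DDAsets M P t := by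
    intro t hrem y hyd hys
    by_contra hc
    exact (hrem y hc).2 hys
  have hTle : ∀ t, (∀ y, y ∉ DDAsets M P t → M.xD y = d ∧ y ∉ Ch M (M.xH y) (insert y W)) →
      ∀ F ∈ TW M d W, P''d.le F (Cd M P''d d (DDAsets M P t)) := by
    intro t hrem F hF
    rcases mem_TW.mp hF with rfl | ⟨y, hyd, hys, rfl⟩
    · exact empty_le_Cd P''d d _
    · exact le_Cd P''d d (singleton_mem_allocs_docPart (hsurv_mem t hrem y hyd hys) hyd)
  have hnotW : ∀ x : X, M.xD x = d → x ∉ W := by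
    intro x hxd hxW
    have : x ∈ docPart M W d := mem_docPart.mpr ⟨hxW, hxd⟩
    rw [hWd] at this
    exact Finset.notMem_empty x this
  have key : ∀ t : ℕ,
      (W ⊆ DDAsets M P t ∧
        (∀ y, y ∉ DDAsets M P t → M.xD y = d ∧ y ∉ Ch M (M.xH y) (insert y W)) ∧
        (DDAsets M P t).card + t ≤ N) ∨ (∃ u ≤ t, DoneAt u) := by
    intro t
    induction t with
    | zero =>
      left
      refine ⟨by rw [DDAsets]; exact Finset.subset_univ W, fun y hy => ?_, ?_⟩
      · exact absurd (by rw [DDAsets]; exact Finset.mem_univ y) hy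
      · rw [DDAsets]; simpa using le_rfl
    | succ n ih =>
      rcases ih with ⟨hWX, hrem, hcard⟩ | ⟨u, hu, hdone⟩
      · -- Phase 1 at n
        have hWXn : W ∩ DDAsets M P n = W := Finset.inter_eq_left.mpr hWX
        have hoff : offers M P n = W ∪ Cd M P''d d (DDAsets M P n) := by
          rw [statOffers hWalloc hWd n, hWXn]
        rcases Cd_cases (M := M) P''d d (DDAsets M P n) with hCd | ⟨z, hzd, hzX, hCd⟩
        · -- Case A : d proposes nothing; stopped with output W
          right
          refine ⟨n, Nat.le_succ n, ?_, ?_⟩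
          · show CH M (offers M P n) = offers M P n
            rw [hoff, hCd, Finset.union_empty, hWIR]
          · rw [hoff, hCd, Finset.union_empty, hWIR, hWd]
            exact (TWmax_eq (empty_mem_TW d W) (fun F hF => by
              have := hTle n hrem F hF
              rwa [hCd] at this)).symm
        · -- d proposes z
          have hzW : z ∉ W := hnotW z hzd
          have hoff' : offers M P n = insert z W := by
            rw [hoff, hCd, union_singleton_eq_insert]
          by_cases hsurv : z ∈ Ch M (M.xH z) (insert z W)
          · -- z survives against W
            set K := Ch M (M.xH z) (insert z W) with hK
            have hKsub : K ⊆ insert z (hospPart M W (M.xH z)) := by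
              intro x hx
              have hx' := Ch_subset_hospPart (M.xH z) (insert z W) hx
              rw [mem_hospPart] at hx'
              rcases Finset.mem_insert.mp hx'.1 with h | h
              · exact Finset.mem_insert.mpr (Or.inl h)
              · exact Finset.mem_insert.mpr (Or.inr (mem_hospPart.mpr ⟨h, hx'.2⟩))
            have hKH : ∀ x ∈ K, M.xH x = M.xH z := by
              intro x hx
              exact (mem_hospPart.mp (Ch_subset_hospPart (M.xH z) (insert z W) hx)).2
            have hCHoff : CH M (offers M P n) =
                K ∪ W.filter (fun x => M.xH x ≠ M.xH z) := by
              rw [hoff']; exact CH_insert_survive hWIR hsurv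
            set ν := K ∪ W.filter (fun x => M.xH x ≠ M.xH z) with hν
            have hνsub : ν ⊆ insert z W := by
              intro x hx
              rcases Finset.mem_union.mp hx with hx | hx
              · exact Ch_subset _ _ hx
              · exact Finset.mem_insert.mpr (Or.inr (Finset.mem_filter.mp hx).1)
            have hrej : offers M P n \ CH M (offers M P n) =
                hospPart M W (M.xH z) \ K := by
              rw [hCHoff, hoff', hν]
              ext x
              simp only [Finset.mem_sdiff, Finset.mem_insert, Finset.mem_union,
                Finset.mem_filter, mem_hospPart]
              constructor
              · rintro ⟨hx1, hx2⟩
                have hnK : x ∉ K := fun hc => hx2 (Or.inl hc)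
                rcases hx1 with rfl | hxW
                · exact absurd hsurv hnK
                · refine ⟨⟨hxW, ?_⟩, hnK⟩
                  by_contra hc
                  exact hx2 (Or.inr ⟨hxW, hc⟩)
              · rintro ⟨⟨hxW, hxh⟩, hxK⟩
                refine ⟨Or.inr hxW, ?_⟩
                rintro (hc | ⟨-, hc⟩)
                · exact hxK hc
                · exact hc hxh
            -- d's part of ν is {z}
            have hνd : docPart M ν d = {z} := by
              ext x
              rw [mem_docPart]
              constructor
              · rintro ⟨hx, hxd⟩
                rcases Finset.mem_insert.mp (hνsub hx) with h | h
                · rw [h]; exact Finset.mem_singleton_self z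
                · exact absurd h (hnotW x hxd)
              · intro hx
                rw [Finset.mem_singleton] at hx; rw [hx]
                exact ⟨Finset.mem_union.mpr (Or.inl hsurv), hzd⟩
            have hTWz : TWmax M d W P''d = {z} :=
              TWmax_eq (mem_TW.mpr (Or.inr ⟨z, hzd, hsurv, rfl⟩)) (fun F hF => by
                have := hTle n hrem F hF
                rwa [hCd] at this)
            by_cases hRj : hospPart M W (M.xH z) \ K = ∅
            · -- B2a : stopped at n
              right
              have hstop : DDAstopped M P n := by
                show CH M (offers M P n) = offers M P n
                apply Finset.Subset.antisymm (CH_subset _)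
                intro x hx
                by_contra hc
                have hmem : x ∈ offers M P n \ CH M (offers M P n) :=
                  Finset.mem_sdiff.mpr ⟨hx, hc⟩
                rw [hrej, hRj] at hmem
                exact Finset.notMem_empty x hmem
              refine ⟨n, Nat.le_succ n, hstop, ?_⟩
              rw [hstop, hoff']
              have hdocins : docPart M (insert z W) d = {z} := by
                ext x
                rw [mem_docPart]
                constructor
                · rintro ⟨hx, hxd⟩
                  rcases Finset.mem_insert.mp hx with h | h
                  · rw [h]; exact Finset.mem_singleton_self z
                  · exact absurd h (hnotW x hxd)
                · intro hx
                  rw [Finset.mem_singleton] at hx; rw [hx]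
                  exact ⟨Finset.mem_insert_self z W, hzd⟩
              rw [hdocins, hTWz]
            · -- B2b : stopped at n+1 with offers ν
              right
              have hX1 : DDAsets M P (n+1) =
                  DDAsets M P n \ (hospPart M W (M.xH z) \ K) := by
                rw [DDAsets]
                unfold offers at hrej
                rw [hrej]
              have hRjW : ∀ x ∈ hospPart M W (M.xH z) \ K, x ∈ W := by
                intro x hx
                exact hospPart_subset W (M.xH z) (Finset.mem_sdiff.mp hx).1
              have hdocX1 : docPart M (DDAsets M P (n+1)) d =
                  docPart M (DDAsets M P n) d := by
                rw [hX1]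
                ext x
                simp only [mem_docPart, Finset.mem_sdiff]
                constructor
                · rintro ⟨⟨hx, -⟩, hxd⟩; exact ⟨hx, hxd⟩
                · rintro ⟨hx, hxd⟩
                  exact ⟨⟨hx, fun hc => hnotW x hxd (hospPart_subset W (M.xH z) hc.1)⟩, hxd⟩
              have hCd1 : Cd M P''d d (DDAsets M P (n+1)) = {z} := by
                rw [Cd_congr_docPart P''d d hdocX1]
                exact hCd
              have hWX1 : W ∩ DDAsets M P (n+1) =
                  W \ (hospPart M W (M.xH z) \ K) := by
                rw [hX1]
                ext x
                simp only [Finset.mem_inter, Finset.mem_sdiff]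
                constructor
                · rintro ⟨hxW, hx, hxr⟩; exact ⟨hxW, hxr⟩
                · rintro ⟨hxW, hxr⟩; exact ⟨hxW, hWX hxW, hxr⟩
              have hoff1 : offers M P (n+1) = ν := by
                rw [statOffers hWalloc hWd (n+1), hCd1, hWX1, union_singleton_eq_insert]
                ext x
                simp only [Finset.mem_insert, Finset.mem_sdiff, mem_hospPart, hν,
                  Finset.mem_union, Finset.mem_filter]
                constructor
                · rintro (rfl | ⟨hxW, hxr⟩)
                  · exact Or.inl hsurv
                  · by_cases hxh : M.xH x = M.xH z
                    · left
                      by_contra hc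
                      exact hxr ⟨⟨hxW, hxh⟩, hc⟩
                    · exact Or.inr ⟨hxW, hxh⟩
                · rintro (hxK | ⟨hxW, hxh⟩)
                  · rcases Finset.mem_insert.mp (hKsub hxK) with h | h
                    · exact Or.inl h
                    · exact Or.inr ⟨(mem_hospPart.mp h).1, fun hc => hc.2 hxK⟩
                  · exact Or.inr ⟨hxW, fun hc => hxh hc.1.2⟩
              -- CH ν = ν
              have hChν : Ch M (M.xH z) ν = K := by
                apply Ch_sandwich (hospPart_mono _ hνsub)
                intro x hx
                exact mem_hospPart.mpr ⟨Finset.mem_union.mpr (Or.inl hx), hKH x hx⟩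
              have hChν' : ∀ h : H, h ≠ M.xH z → Ch M h ν = hospPart M W h := by
                intro h hh
                have hpart : hospPart M ν h = hospPart M W h := by
                  ext x
                  simp only [mem_hospPart, hν, Finset.mem_union, Finset.mem_filter]
                  constructor
                  · rintro ⟨hx | ⟨hxW, -⟩, hxh⟩
                    · exact absurd (hKH x hx) (fun hc => hh (hxh.symm.trans hc))
                    · exact ⟨hxW, hxh⟩
                  · rintro ⟨hxW, hxh⟩
                    exact ⟨Or.inr ⟨hxW, fun hc => hh (hxh.symm.trans hc)⟩, hxh⟩
                rw [Ch_congr hpart, Ch_eq_hospPart_of_IR hWIR]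
              have hCHν : CH M ν = ν := by
                ext x
                rw [mem_CH]
                by_cases hxh : M.xH x = M.xH z
                · rw [hxh, hChν]
                  constructor
                  · intro hx; exact Finset.mem_union.mpr (Or.inl hx)
                  · intro hx
                    rcases Finset.mem_union.mp hx with hx | hx
                    · exact hx
                    · exact absurd hxh (Finset.mem_filter.mp hx).2
                · rw [hChν' (M.xH x) hxh]
                  constructor
                  · intro hx
                    exact Finset.mem_union.mpr
                      (Or.inr (Finset.mem_filter.mpr ⟨(mem_hospPart.mp hx).1, hxh⟩))
                  · intro hx
                    rcases Finset.mem_union.mp hx with hx | hx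
                    · exact absurd (hKH x hx) hxh
                    · exact mem_hospPart.mpr ⟨(Finset.mem_filter.mp hx).1, rfl⟩
              have hstop1 : DDAstopped M P (n+1) := by
                show CH M (offers M P (n+1)) = offers M P (n+1)
                rw [hoff1, hCHν]
              refine ⟨n+1, le_rfl, hstop1, ?_⟩
              rw [hstop1, hoff1, hνd, hTWz]
          · -- B1 : z is rejected; stay in Phase 1
            left
            have hCHoff : CH M (offers M P n) = W := by
              rw [hoff']
              exact CH_insert_not_survive (d := d) hWIR hzd hzW hsurv
            have hrej : offers M P n \ CH M (offers M P n) = {z} := by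
              rw [hCHoff, hoff']
              ext x
              simp only [Finset.mem_sdiff, Finset.mem_insert, Finset.mem_singleton]
              constructor
              · rintro ⟨rfl | hxW, hx2⟩
                · rfl
                · exact absurd hxW hx2
              · rintro rfl
                exact ⟨Or.inl rfl, hzW⟩
            have hX1 : DDAsets M P (n+1) = DDAsets M P n \ {z} := by
              rw [DDAsets]
              unfold offers at hrej
              rw [hrej]
            refine ⟨?_, ?_, ?_⟩
            · rw [hX1]
              intro x hx
              exact Finset.mem_sdiff.mpr ⟨hWX hx,
                fun hc => hzW ((Finset.mem_singleton.mp hc) ▸ hx)⟩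
            · intro y hy
              rw [hX1, Finset.mem_sdiff] at hy
              push_neg at hy
              by_cases hyn : y ∈ DDAsets M P n
              · have := hy hyn
                rw [Finset.mem_singleton] at this; subst this
                exact ⟨hzd, hsurv⟩
              · exact hrem y hyn
            · rw [hX1, Finset.card_sdiff_of_subset (Finset.singleton_subset_iff.mpr hzX)]
              have hpos : 1 ≤ (DDAsets M P n).card := Finset.card_pos.mpr ⟨z, hzX⟩
              simp only [Finset.card_singleton]
              omega
      · exact Or.inr ⟨u, Nat.le_succ_of_le hu, hdone⟩
  -- conclude
  have final : ∃ u ≤ N, DoneAt u := by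
    rcases key N with ⟨hWX, hrem, hcard⟩ | h
    · have hXN : DDAsets M P N = ∅ := by
        have : (DDAsets M P N).card = 0 := by omega
        exact Finset.card_eq_zero.mp this
      have hWemp : W = ∅ := Finset.subset_empty.mp (hXN ▸ hWX)
      have hCdN : Cd M P''d d (DDAsets M P N) = ∅ := by
        apply Finset.subset_empty.mp
        intro x hx
        rw [← hXN]
        exact Cd_subset P''d d _ hx
      have hoffN : offers M P N = ∅ := by
        rw [statOffers hWalloc hWd N, hCdN, hWemp]
        simp
      refine ⟨N, le_rfl, ?_, ?_⟩
      · show CH M (offers M P N) = offers M P N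
        rw [hoffN, CH_empty]
      · rw [hoffN, CH_empty]
        have : docPart M (∅ : Finset X) d = ∅ := by
          apply Finset.subset_empty.mp
          exact docPart_subset ∅ d
        rw [this]
        exact (TWmax_eq (empty_mem_TW d W) (fun F hF => by
          have := hTle N hrem F hF
          rwa [hCdN] at this)).symm
    · exact h
  obtain ⟨u, hu, hstop, hout⟩ := final
  show docPart M (DDAoutput M P) d = TWmax M d W P''d
  rw [DDAoutput_eq_of_stopped hu hstop]
  exact hout

end StaticMain
section Assembly

variable {M : Market D H X}

lemma CD_isAllocation (P : Profile D X) (Y : Finset X) : IsAllocation M (CD M P Y) := by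
  intro x hx y hy hxy
  rw [mem_CD] at hx hy
  have h1 := Cd_singleton_of_mem _ _ hx
  have h2 := Cd_singleton_of_mem _ _ hy
  rw [hxy] at h1
  rw [h1] at h2
  exact Finset.singleton_inj.mp h2

lemma IsAllocation.subset {W W' : Finset X} (hW : IsAllocation M W) (hsub : W' ⊆ W) :
    IsAllocation M W' :=
  fun x hx y hy hxy => hW x (hsub hx) y (hsub hy) hxy

lemma isAllocation_empty : IsAllocation M (∅ : Finset X) :=
  fun x hx => absurd hx (Finset.notMem_empty x)

lemma docPart_empty (d : D) : docPart M (∅ : Finset X) d = ∅ :=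
  Finset.subset_empty.mp (docPart_subset ∅ d)

lemma hospPart_singleton (x : X) : hospPart M ({x} : Finset X) (M.xH x) = {x} := by
  ext y
  rw [mem_hospPart, Finset.mem_singleton]
  constructor
  · rintro ⟨h, -⟩; exact h
  · rintro rfl; exact ⟨rfl, rfl⟩

/-- Every outcome of the doctor-optimal rule lies in `TW M d ∅`. -/
lemma outcome_mem_TW_empty (hsub : ∀ h : H, Substitutable M h) (P : Profile D X) (d : D) :
    docOpt M P d ∈ TW M d ∅ := by
  rw [docOpt_eq]
  rcases Cd_cases (M := M) (P d) d (DDAsets M P (Fintype.card X)) with hCd | ⟨x, hxd, hxX, hCd⟩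
  · rw [hCd]; exact empty_mem_TW d ∅
  · rw [hCd]
    apply mem_TW.mpr
    refine Or.inr ⟨x, hxd, ?_, rfl⟩
    have hxoff : x ∈ offers M P (Fintype.card X) := by
      apply mem_CD.mpr
      rw [hxd, hCd]
      exact Finset.mem_singleton_self x
    have hxCH : x ∈ CH M (offers M P (Fintype.card X)) := by
      rw [stopped_card P]
      exact hxoff
    have hxCh := mem_CH.mp hxCH
    refine hsub (M.xH x) (offers M P (Fintype.card X)) (insert x ∅) ?_ x ?_ hxCh
    · intro y hy
      have hins : (insert x ∅ : Finset X) = {x} := rfl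
      rw [hins, hospPart_singleton, Finset.mem_singleton] at hy
      rw [hy]
      exact mem_hospPart.mpr ⟨hxoff, rfl⟩
    · have hins : (insert x ∅ : Finset X) = {x} := rfl
      rw [hins, hospPart_singleton]
      exact Finset.mem_singleton_self x

/-- Construction of the worst-case witness set `W` at a profile `Q`. -/
lemma worst_witness (hsub : ∀ h : H, Substitutable M h) (d : D) (Q : Profile D X) :
    ∃ W : Finset X, IsAllocation M W ∧ docPart M W d = ∅ ∧ CH M W = W ∧
      ∀ E ∈ TW M d W, (Q d).le E (docOpt M Q d) := by
  classical
  set N := Fintype.card X with hN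
  set w := docOpt M Q d with hw
  have hwCd : w = Cd M (Q d) d (DDAsets M Q N) := docOpt_eq Q d
  -- any contract that d strictly prefers to w has been rejected at some round < N
  have hrejected : ∀ z : X, M.xD z = d → ¬ (Q d).le ({z} : Finset X) w →
      ∃ j < N, z ∈ offers M Q j ∧ z ∉ CH M (offers M Q j) := by
    intro z hzd hzlt
    have hzX : z ∉ DDAsets M Q N := by
      intro hzX
      exact hzlt (hwCd ▸ le_Cd (Q d) d (singleton_mem_allocs_docPart hzX hzd))
    exact removed_rejected hzX
  set p : ℕ → Prop := fun k => ∃ ζ, ζ ∈ offers M Q k ∧ M.xD ζ = d ∧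
    ζ ∉ CH M (offers M Q k) with hp
  by_cases hex : ∃ k, k ≤ N ∧ p k
  · -- main case : take the last rejection round
    obtain ⟨k0, hk0, hpk0⟩ := hex
    set REJD : Finset ℕ := (Finset.range (N+1)).filter p with hREJD
    have hREJDne : REJD.Nonempty :=
      ⟨k0, Finset.mem_filter.mpr ⟨Finset.mem_range.mpr (Nat.lt_succ_of_le hk0), hpk0⟩⟩
    set s := REJD.max' hREJDne with hs
    have hsmem : s ∈ Finset.filter p (Finset.range (N+1)) := REJD.max'_mem hREJDne
    obtain ⟨hsrange, hps⟩ := Finset.mem_filter.mp hsmem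
    simp only [hp] at hps
    obtain ⟨ζ, hζoff, hζd, hζrej⟩ := hps
    set W := CH M (offers M Q s) with hW
    have hWsub : W ⊆ offers M Q s := CH_subset _
    have hWd : docPart M W d = ∅ := by
      apply Finset.eq_empty_of_forall_notMem
      intro x hx
      obtain ⟨hxW, hxd⟩ := mem_docPart.mp hx
      have hxoff : x ∈ offers M Q s := hWsub hxW
      have h1 := offers_eq_Cd hxoff
      have h2 := offers_eq_Cd hζoff
      rw [hxd] at h1
      rw [hζd] at h2
      have : x = ζ := by
        have := h1.symm.trans h2
        exact Finset.singleton_inj.mp this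
      subst this
      exact hζrej hxW
    have hChW : ∀ h : H, Ch M h W = Ch M h (offers M Q s) := by
      intro h
      apply Ch_sandwich (hospPart_mono h hWsub)
      intro x hx
      have hxh := (mem_hospPart.mp (Ch_subset_hospPart h _ hx)).2
      refine mem_hospPart.mpr ⟨?_, hxh⟩
      rw [hW]
      apply mem_CH.mpr
      rwa [hxh]
    have hWIR : CH M W = W := by
      ext x
      rw [mem_CH, hChW (M.xH x), ← hospPart_CH, ← hW]
      constructor
      · intro h; exact (mem_hospPart.mp h).1
      · intro h; exact mem_hospPart.mpr ⟨h, rfl⟩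
    refine ⟨W, (CD_isAllocation Q _).subset hWsub, hWd, hWIR, ?_⟩
    intro E hE
    rcases mem_TW.mp hE with rfl | ⟨z, hzd, hzs, rfl⟩
    · rw [hwCd]; exact empty_le_Cd _ _ _
    · by_contra hc
      have hlt : ¬ (Q d).le ({z} : Finset X) w := hc
      obtain ⟨j, hjN, hzoff, hzrej⟩ := hrejected z hzd hlt
      have hjREJD : j ∈ REJD :=
        Finset.mem_filter.mpr ⟨Finset.mem_range.mpr (Nat.lt_succ_of_lt hjN),
          ⟨z, hzoff, hzd, hzrej⟩⟩
      have hjs : j ≤ s := REJD.le_max' j hjREJD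
      have hzacc : z ∉ Ch M (M.xH z) (accOffers M Q s) :=
        reject_persists hsub Q hjs hzoff hzrej
      -- identify Ch over insert z W with Ch over the accumulated offers
      have hzW : z ∈ accOffers M Q s := offers_subset_accOffers Q hjs hzoff
      have hsand : Ch M (M.xH z) (insert z W) = Ch M (M.xH z) (accOffers M Q s) := by
        apply Ch_sandwich
        · apply hospPart_mono
          intro y hy
          rcases Finset.mem_insert.mp hy with rfl | hyW
          · exact hzW
          · exact offers_subset_accOffers Q le_rfl (hWsub hyW)
        · rw [Ch_accOffers hsub Q s, ← hChW (M.xH z), Ch_eq_hospPart_of_IR hWIR]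
          exact hospPart_mono _ (Finset.subset_insert z W)
      rw [hsand] at hzs
      exact hzacc hzs
  · -- no rejection of d ever : W = ∅ works
    push_neg at hex
    refine ⟨∅, isAllocation_empty, docPart_empty d, CH_empty, ?_⟩
    intro E hE
    rcases mem_TW.mp hE with rfl | ⟨z, hzd, -, rfl⟩
    · rw [hwCd]; exact empty_le_Cd _ _ _
    · by_contra hc
      obtain ⟨j, hjN, hzoff, hzrej⟩ := hrejected z hzd hc
      exact hex j (le_of_lt hjN) ⟨z, hzoff, hzd, hzrej⟩

/-! #### worstIn / bestIn -/

lemma optionSet_nonempty (rule : Profile D X → D → Finset X) (d : D) (Pd : Pref X) :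
    (optionSet rule d Pd).Nonempty :=
  ⟨rule (fun _ => Pd) d, ⟨fun _ => Pd, rfl, rfl⟩⟩

lemma worstIn_le {pr : Pref X} {S : Set (Finset X)} {a : Finset X} (ha : a ∈ S) :
    pr.le (worstIn pr S) a := by
  unfold worstIn
  rw [dif_pos ⟨a, ha⟩]
  exact @Finset.min'_le _ pr _ _ ((Set.Finite.mem_toFinset _).mpr ha)

lemma worstIn_mem {pr : Pref X} {S : Set (Finset X)} (hS : S.Nonempty) :
    worstIn pr S ∈ S := by
  unfold worstIn
  rw [dif_pos hS]
  exact (Set.Finite.mem_toFinset _).mp (@Finset.min'_mem _ pr _ _)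

lemma le_bestIn {pr : Pref X} {S : Set (Finset X)} {a : Finset X} (ha : a ∈ S) :
    pr.le a (bestIn pr S) := by
  unfold bestIn
  rw [dif_pos ⟨a, ha⟩]
  exact @Finset.le_max' _ pr _ _ ((Set.Finite.mem_toFinset _).mpr ha)

lemma bestIn_mem {pr : Pref X} {S : Set (Finset X)} (hS : S.Nonempty) :
    bestIn pr S ∈ S := by
  unfold bestIn
  rw [dif_pos hS]
  exact (Set.Finite.mem_toFinset _).mp (@Finset.max'_mem _ pr _ _)

end Assembly
/-- Theorem 1: if every hospital's preference is substitutable, the doctor-optimal rule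
is not obviously manipulable. -/
theorem docOpt_NOM (M : Market D H X) (hsub : ∀ h : H, Substitutable M h) :
    NOM (docOpt M) := by
  intro d Pd P'd hOM
  obtain ⟨-, hobv⟩ := hOM
  rcases hobv with hworst | hbest
  · -- worst-case clause is impossible
    obtain ⟨Q, hQd, hQ⟩ := worstIn_mem (pr := Pd) (optionSet_nonempty (docOpt M) d Pd)
    obtain ⟨W, hWa, hWd, hWIR, hbound⟩ := worst_witness hsub d Q
    have hout := staticRun (M := M) (d := d) (W := W) P'd hWa hWd hWIR
    have hmem' : docOpt M (statProfile M d W P'd) d ∈ optionSet (docOpt M) d P'd :=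
      ⟨statProfile M d W P'd, if_pos rfl, rfl⟩
    have h1 : Pd.le (worstIn Pd (optionSet (docOpt M) d P'd))
        (docOpt M (statProfile M d W P'd) d) := worstIn_le hmem'
    have h2 : Pd.le (docOpt M (statProfile M d W P'd) d)
        (worstIn Pd (optionSet (docOpt M) d Pd)) := by
      rw [hout, hQ]
      have := hbound (TWmax M d W P'd) (@Finset.max'_mem _ P'd _ (TW_nonempty d W))
      rwa [hQd] at this
    have h3 : Pd.le (worstIn Pd (optionSet (docOpt M) d P'd))
        (worstIn Pd (optionSet (docOpt M) d Pd)) :=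
      @le_trans _ (@PartialOrder.toPreorder _ (@LinearOrder.toPartialOrder _ Pd)) _ _ _ h1 h2
    exact ((@lt_iff_le_not_ge _ (@PartialOrder.toPreorder _ (@LinearOrder.toPartialOrder _ Pd))
      _ _).mp hworst).2 h3
  · -- best-case clause is impossible
    obtain ⟨P', hP'd, hB⟩ := bestIn_mem (pr := Pd) (optionSet_nonempty (docOpt M) d P'd)
    have hBTW : bestIn Pd (optionSet (docOpt M) d P'd) ∈ TW M d ∅ := by
      rw [hB]
      exact outcome_mem_TW_empty hsub P' d
    have hout := staticRun (M := M) (d := d) (W := (∅ : Finset X)) Pd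
      isAllocation_empty (docPart_empty d) CH_empty
    have hmem' : docOpt M (statProfile M d ∅ Pd) d ∈ optionSet (docOpt M) d Pd :=
      ⟨statProfile M d ∅ Pd, if_pos rfl, rfl⟩
    have h1 : Pd.le (bestIn Pd (optionSet (docOpt M) d P'd)) (TWmax M d ∅ Pd) :=
      @Finset.le_max' _ Pd _ _ hBTW
    have h2 : Pd.le (TWmax M d ∅ Pd) (bestIn Pd (optionSet (docOpt M) d Pd)) := by
      rw [← hout]
      exact le_bestIn hmem'
    have h3 : Pd.le (bestIn Pd (optionSet (docOpt M) d P'd))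
        (bestIn Pd (optionSet (docOpt M) d Pd)) :=
      @le_trans _ (@PartialOrder.toPreorder _ (@LinearOrder.toPartialOrder _ Pd)) _ _ _ h1 h2
    exact ((@lt_iff_le_not_ge _ (@PartialOrder.toPreorder _ (@LinearOrder.toPartialOrder _ Pd))
      _ _).mp hbest).2 h3

end Matching
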